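/- If the coefficients T_n of a power series are weakly increasing positive integers with T_1 = 1 and satisfy T_{n+1} = (1/n) Σ_{i=1}^{n} ( (Σ_{d|i} d T_d) T_{n−i+1} + T_{n−i+1} ), then T_{n+1} ≤ 2 Σ_{i=1}^{n} T_i T_{n−i+1} for all n ≥ 1. -/

import Mathlib

/-- If the coefficients `T_n` are weakly increasing positive integers with `T_1 = 1`
satisfying `n · T_{n+1} = Σ_{i=1}^{n} ((Σ_{d∣i} d·T_d)·T_{n-i+1} + T_{n-i+1})`, then
`T_{n+1} ≤ 2 Σ_{i=1}^{n} T_i T_{n-i+1}` for all `n ≥ 1`. -/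
theorem stmt2 (T : ℕ → ℕ) (h1 : T 1 = 1) (hpos : ∀ n, 1 ≤ n → 1 ≤ T n)
    (hmono : ∀ n, 1 ≤ n → T n ≤ T (n + 1))
    (hrec : ∀ n, 1 ≤ n → n * T (n + 1) =
      ∑ i ∈ Finset.Icc 1 n, ((∑ d ∈ Nat.divisors i, d * T d) * T (n - i + 1) + T (n - i + 1))) :
    ∀ n, 1 ≤ n → T (n + 1) ≤ 2 * ∑ i ∈ Finset.Icc 1 n, T i * T (n - i + 1) := by
  have mono : ∀ a b, 1 ≤ a → a ≤ b → T a ≤ T b := by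
    intro a b ha hab
    induction b with
    | zero => omega
    | succ b ih =>
      rcases Nat.lt_or_ge a (b + 1) with h | h
      · exact le_trans (ih (by omega)) (hmono b (by omega))
      · have : a = b + 1 := by omega
        simp [this]
  intro n hn
  have key : ∑ i ∈ Finset.Icc 1 n, ((∑ d ∈ Nat.divisors i, d * T d) * T (n - i + 1))
      ≤ n * ∑ i ∈ Finset.Icc 1 n, T i * T (n - i + 1) := by
    have hdiv : ∀ i ∈ Finset.Icc 1 n, (∑ d ∈ Nat.divisors i, d * T d) * T (n - i + 1)
        = ∑ d ∈ Finset.Icc 1 n, if d ∣ i then d * T d * T (n - i + 1) else 0 := by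
      intro i hi
      simp only [Finset.mem_Icc] at hi
      rw [Finset.sum_mul, ← Finset.sum_filter]
      apply Finset.sum_congr _ (fun _ _ => rfl)
      ext d
      simp only [Nat.mem_divisors, Finset.mem_filter, Finset.mem_Icc]
      constructor
      · rintro ⟨hd, _⟩
        exact ⟨⟨Nat.pos_of_dvd_of_pos hd (by omega),
          le_trans (Nat.le_of_dvd (by omega) hd) hi.2⟩, hd⟩
      · rintro ⟨_, hd⟩; exact ⟨hd, by omega⟩
    calc ∑ i ∈ Finset.Icc 1 n, ((∑ d ∈ Nat.divisors i, d * T d) * T (n - i + 1))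
        = ∑ i ∈ Finset.Icc 1 n, ∑ d ∈ Finset.Icc 1 n,
            if d ∣ i then d * T d * T (n - i + 1) else 0 := Finset.sum_congr rfl hdiv
      _ = ∑ d ∈ Finset.Icc 1 n, ∑ i ∈ Finset.Icc 1 n,
            if d ∣ i then d * T d * T (n - i + 1) else 0 := Finset.sum_comm
      _ ≤ ∑ d ∈ Finset.Icc 1 n, n * (T d * T (n - d + 1)) := by
          apply Finset.sum_le_sum
          intro d hd
          simp only [Finset.mem_Icc] at hd
          rw [← Finset.sum_filter]
          calc ∑ i ∈ (Finset.Icc 1 n).filter (d ∣ ·), d * T d * T (n - i + 1)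
              ≤ ∑ i ∈ (Finset.Icc 1 n).filter (d ∣ ·), d * T d * T (n - d + 1) := by
                apply Finset.sum_le_sum
                intro i hi
                simp only [Finset.mem_filter, Finset.mem_Icc] at hi
                have hdi : d ≤ i := Nat.le_of_dvd (by omega) hi.2
                exact Nat.mul_le_mul_left _ (mono _ _ (by omega) (by omega))
            _ = ((Finset.Icc 1 n).filter (d ∣ ·)).card * (d * T d * T (n - d + 1)) := by
                rw [Finset.sum_const, smul_eq_mul]
            _ = (n / d) * (d * T d * T (n - d + 1)) := by
                congr 1
                have : Finset.Icc 1 n = Finset.Ioc 0 n := rfl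
                rw [this, Nat.Ioc_filter_dvd_card_eq_div]
            _ ≤ n * (T d * T (n - d + 1)) := by
                calc (n / d) * (d * T d * T (n - d + 1))
                    = (n / d * d) * (T d * T (n - d + 1)) := by ring
                  _ ≤ n * (T d * T (n - d + 1)) :=
                      Nat.mul_le_mul_right _ (Nat.div_mul_le_self n d)
      _ = n * ∑ i ∈ Finset.Icc 1 n, T i * T (n - i + 1) := (Finset.mul_sum _ _ _).symm
  have key2 : ∑ i ∈ Finset.Icc 1 n, T (n - i + 1)
      ≤ n * ∑ i ∈ Finset.Icc 1 n, T i * T (n - i + 1) := by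
    calc ∑ i ∈ Finset.Icc 1 n, T (n - i + 1)
        ≤ ∑ i ∈ Finset.Icc 1 n, T i * T (n - i + 1) := by
          apply Finset.sum_le_sum
          intro i hi
          simp only [Finset.mem_Icc] at hi
          exact Nat.le_mul_of_pos_left _ (hpos i hi.1)
      _ ≤ n * ∑ i ∈ Finset.Icc 1 n, T i * T (n - i + 1) :=
          Nat.le_mul_of_pos_left _ (by omega)
  have hr := hrec n hn
  rw [Finset.sum_add_distrib] at hr
  have : n * T (n + 1) ≤ n * (2 * ∑ i ∈ Finset.Icc 1 n, T i * T (n - i + 1)) := by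
    rw [hr]
    calc _ ≤ n * (∑ i ∈ Finset.Icc 1 n, T i * T (n - i + 1))
        + n * (∑ i ∈ Finset.Icc 1 n, T i * T (n - i + 1)) := Nat.add_le_add key key2
      _ = n * (2 * ∑ i ∈ Finset.Icc 1 n, T i * T (n - i + 1)) := by ring
  exact Nat.le_of_mul_le_mul_left this (by omega)
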